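/- Let S be a finite set of unit vectors in ℂ^m such that for any two distinct x, y ∈ S, |x* y|² ∈ {0, α} for some fixed real α with 0 < α < 1, and every vector in S is flat (all entries have the same absolute value 1/√m). Then |S| ≤ m(m² - m + 2)/2. -/

import Mathlib

open Finset

section
variable {γ : Type*} [LinearOrder γ]

private lemma aux_split (s : Finset γ) :
    (s ×ˢ s) = (s ×ˢ s).filter (fun q => q.1 ≤ q.2)
      ∪ (s ×ˢ s).filter (fun q => q.2 < q.1) := by
  classical
  conv_lhs => rw [← Finset.filter_union_filter_not_eq (fun q : γ × γ => q.1 ≤ q.2) (s ×ˢ s)]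
  congr 1
  apply Finset.filter_congr
  intro q _
  simp [not_le]

private lemma aux_disj (s : Finset γ) :
    Disjoint ((s ×ˢ s).filter (fun q => q.1 ≤ q.2))
      ((s ×ˢ s).filter (fun q => q.2 < q.1)) := by
  rw [Finset.disjoint_left]
  intro q h1 h2
  exact absurd (Finset.mem_filter.1 h1).2 (not_le.2 (Finset.mem_filter.1 h2).2)

private lemma aux_le_split (s : Finset γ) :
    (s ×ˢ s).filter (fun q => q.1 ≤ q.2)
      = (s ×ˢ s).filter (fun q => q.1 < q.2) ∪ (s ×ˢ s).filter (fun q => q.1 = q.2) := by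
  classical
  rw [← Finset.filter_or]
  apply Finset.filter_congr
  intro q _
  simp [le_iff_lt_or_eq]

private lemma aux_disj2 (s : Finset γ) :
    Disjoint ((s ×ˢ s).filter (fun q => q.1 < q.2))
      ((s ×ˢ s).filter (fun q => q.1 = q.2)) := by
  rw [Finset.disjoint_left]
  intro q h1 h2
  exact absurd (Finset.mem_filter.1 h2).2 (ne_of_lt (Finset.mem_filter.1 h1).2)

lemma aux_sum_sym (s : Finset γ) (g : γ → γ → ℂ) (w : γ → γ → ℂ)
    (hg : ∀ a b, g a b = g b a) (hww : ∀ a, w a a = 1) (hw : ∀ a b, a ≠ b → w a b = 2) :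
    ∑ q ∈ s ×ˢ s, g q.1 q.2
      = ∑ q ∈ (s ×ˢ s).filter (fun q => q.1 ≤ q.2),
          w q.1 q.2 * g q.1 q.2 := by
  classical
  have hswap : ∑ q ∈ (s ×ˢ s).filter (fun q => q.2 < q.1), g q.1 q.2
      = ∑ q ∈ (s ×ˢ s).filter (fun q => q.1 < q.2), g q.1 q.2 := by
    apply Finset.sum_nbij' (fun q => (q.2, q.1)) (fun q => (q.2, q.1))
    · intro q hq; simp only [Finset.mem_filter, Finset.mem_product] at *; tauto
    · intro q hq; simp only [Finset.mem_filter, Finset.mem_product] at *; tauto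
    · intro q _; rfl
    · intro q _; rfl
    · intro q _; exact hg q.1 q.2
  have h1 : ∑ q ∈ (s ×ˢ s).filter (fun q => q.1 < q.2),
      w q.1 q.2 * g q.1 q.2
      = ∑ q ∈ (s ×ˢ s).filter (fun q => q.1 < q.2), (g q.1 q.2 + g q.1 q.2) := by
    apply Finset.sum_congr rfl
    intro q hq
    rw [hw _ _ (ne_of_lt (Finset.mem_filter.1 hq).2)]
    ring
  have h2 : ∑ q ∈ (s ×ˢ s).filter (fun q => q.1 = q.2),
      w q.1 q.2 * g q.1 q.2
      = ∑ q ∈ (s ×ˢ s).filter (fun q => q.1 = q.2), g q.1 q.2 := by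
    apply Finset.sum_congr rfl
    intro q hq
    rw [(Finset.mem_filter.1 hq).2, hww, one_mul]
  calc ∑ q ∈ s ×ˢ s, g q.1 q.2
      = ∑ q ∈ (s ×ˢ s).filter (fun q => q.1 ≤ q.2), g q.1 q.2
        + ∑ q ∈ (s ×ˢ s).filter (fun q => q.2 < q.1), g q.1 q.2 := by
        conv_lhs => rw [aux_split s]
        exact Finset.sum_union (aux_disj s)
    _ = (∑ q ∈ (s ×ˢ s).filter (fun q => q.1 < q.2), g q.1 q.2
        + ∑ q ∈ (s ×ˢ s).filter (fun q => q.1 = q.2), g q.1 q.2)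
        + ∑ q ∈ (s ×ˢ s).filter (fun q => q.1 < q.2), g q.1 q.2 := by
        rw [hswap]
        congr 1
        conv_lhs => rw [aux_le_split s]
        exact Finset.sum_union (aux_disj2 s)
    _ = ∑ q ∈ (s ×ˢ s).filter (fun q => q.1 < q.2),
          w q.1 q.2 * g q.1 q.2
        + ∑ q ∈ (s ×ˢ s).filter (fun q => q.1 = q.2),
          w q.1 q.2 * g q.1 q.2 := by
        rw [h1, h2, Finset.sum_add_distrib]
        ring
    _ = ∑ q ∈ (s ×ˢ s).filter (fun q => q.1 ≤ q.2),
          w q.1 q.2 * g q.1 q.2 := by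
        conv_rhs => rw [aux_le_split s]
        exact (Finset.sum_union (aux_disj2 s)).symm

lemma aux_half_card (s : Finset γ) :
    2 * ((s ×ˢ s).filter (fun q => q.1 ≤ q.2)).card = s.card * s.card + s.card := by
  classical
  have hswap : ((s ×ˢ s).filter (fun q => q.2 < q.1)).card
      = ((s ×ˢ s).filter (fun q => q.1 < q.2)).card := by
    apply Finset.card_nbij' (fun q => (q.2, q.1)) (fun q => (q.2, q.1))
    · intro q hq; simp only [Finset.mem_coe, Finset.mem_filter, Finset.mem_product] at *; tauto
    · intro q hq; simp only [Finset.mem_coe, Finset.mem_filter, Finset.mem_product] at *; tauto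
    · intro q _; rfl
    · intro q _; rfl
  have hdiag : ((s ×ˢ s).filter (fun q => q.1 = q.2)).card = s.card := by
    rw [show (s ×ˢ s).filter (fun q => q.1 = q.2) = s.image (fun a => (a, a)) by
      ext q
      simp only [Finset.mem_filter, Finset.mem_product, Finset.mem_image]
      constructor
      · rintro ⟨⟨h1, h2⟩, h3⟩
        exact ⟨q.1, h1, by rw [Prod.ext_iff]; exact ⟨rfl, h3⟩⟩
      · rintro ⟨a, ha, rfl⟩
        exact ⟨⟨ha, ha⟩, rfl⟩]
    exact Finset.card_image_of_injective _ (fun a b h => (Prod.ext_iff.1 h).1)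
  have e1 : s.card * s.card
      = ((s ×ˢ s).filter (fun q => q.1 ≤ q.2)).card
        + ((s ×ˢ s).filter (fun q => q.1 < q.2)).card := by
    rw [← hswap, ← Finset.card_union_of_disjoint (aux_disj s), ← aux_split s,
      Finset.card_product]
  have e2 : ((s ×ˢ s).filter (fun q => q.1 ≤ q.2)).card
      = ((s ×ˢ s).filter (fun q => q.1 < q.2)).card + s.card := by
    rw [aux_le_split s, Finset.card_union_of_disjoint (aux_disj2 s), hdiag]
  omega

end

def Aset (m : ℕ) : Finset (Fin m × Fin m × Fin m) :=
  univ.filter (fun p => p.2.1 ≤ p.2.2 ∧ p.1 ≠ p.2.1 ∧ p.1 ≠ p.2.2)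

lemma Aset_biUnion (m : ℕ) :
    Aset m = univ.biUnion (fun i : Fin m =>
      ({i} : Finset (Fin m)) ×ˢ
        (((univ.erase i) ×ˢ (univ.erase i)).filter (fun q => q.1 ≤ q.2))) := by
  ext p
  simp only [Aset, Finset.mem_filter, Finset.mem_univ, true_and, Finset.mem_biUnion,
    Finset.mem_product, Finset.mem_singleton, Finset.mem_erase]
  constructor
  · rintro ⟨h1, h2, h3⟩
    exact ⟨p.1, ⟨rfl, ⟨⟨Ne.symm h2, trivial⟩, ⟨Ne.symm h3, trivial⟩⟩, h1⟩⟩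
  · rintro ⟨i, rfl, ⟨⟨hj, -⟩, ⟨hk, -⟩⟩, hle⟩
    exact ⟨hle, Ne.symm hj, Ne.symm hk⟩

lemma Aset_pd (m : ℕ) :
    ((univ : Finset (Fin m)) : Set (Fin m)).PairwiseDisjoint (fun i : Fin m =>
      ({i} : Finset (Fin m)) ×ˢ
        (((univ.erase i) ×ˢ (univ.erase i)).filter (fun q => q.1 ≤ q.2))) := by
  intro i _ j _ hij
  rw [Function.onFun, Finset.disjoint_left]
  intro p hp hq
  rw [Finset.mem_product, Finset.mem_singleton] at hp hq
  exact hij (hp.1 ▸ hq.1 ▸ rfl)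

lemma countA (m : ℕ) : 2 * (Aset m).card = m * m * (m - 1) := by
  classical
  rw [Aset_biUnion m, Finset.card_biUnion (fun i _ j _ hij => Aset_pd m (by simp) (by simp) hij)]
  rw [Finset.mul_sum]
  have : ∀ i : Fin m,
      2 * (({i} : Finset (Fin m)) ×ˢ
        (((univ.erase i) ×ˢ (univ.erase i)).filter (fun q => q.1 ≤ q.2))).card
      = (m - 1) * (m - 1) + (m - 1) := by
    intro i
    rw [Finset.card_product, Finset.card_singleton, one_mul]
    rw [aux_half_card (univ.erase i)]
    rw [Finset.card_erase_of_mem (Finset.mem_univ i), Finset.card_univ, Fintype.card_fin]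
  rw [Finset.sum_congr rfl (fun i _ => this i), Finset.sum_const, Finset.card_univ,
    Fintype.card_fin, smul_eq_mul]
  cases m with
  | zero => simp
  | succ n => simp only [Nat.add_sub_cancel]; ring

lemma sumA (m : ℕ) (a b : Fin m → ℂ) :
    ∑ p ∈ Aset m, (if p.2.1 = p.2.2 then (1:ℂ) else 2) * (a p.1 * b p.2.1 * b p.2.2)
      = ∑ i, a i * ((∑ j, b j) - b i) * ((∑ j, b j) - b i) := by
  classical
  rw [Aset_biUnion m, Finset.sum_biUnion (Aset_pd m)]
  apply Finset.sum_congr rfl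
  intro i _
  rw [Finset.sum_product, Finset.sum_singleton]
  have hsym : ∑ q ∈ (univ.erase i) ×ˢ (univ.erase i), a i * b q.1 * b q.2
      = ∑ q ∈ ((univ.erase i) ×ˢ (univ.erase i)).filter (fun q => q.1 ≤ q.2),
        (if q.1 = q.2 then (1:ℂ) else 2) * (a i * b q.1 * b q.2) :=
    aux_sum_sym (univ.erase i) (fun j k => a i * b j * b k)
      (fun j k => if j = k then (1:ℂ) else 2)
      (fun j k => by ring) (fun j => by simp) (fun j k h => by simp [h])
  have hid : (∑ y ∈ ((univ.erase i) ×ˢ (univ.erase i)).filter (fun q => q.1 ≤ q.2),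
      (if (i, y).2.1 = (i, y).2.2 then (1:ℂ) else 2)
        * (a (i, y).1 * b (i, y).2.1 * b (i, y).2.2))
      = ∑ y ∈ ((univ.erase i) ×ˢ (univ.erase i)).filter (fun q => q.1 ≤ q.2),
      (if y.1 = y.2 then (1:ℂ) else 2) * (a i * b y.1 * b y.2) := rfl
  rw [hid, ← hsym, Finset.sum_product]
  have herase : ∑ j ∈ univ.erase i, b j = (∑ j, b j) - b i :=
    Finset.sum_erase_eq_sub (Finset.mem_univ i)
  calc ∑ j ∈ univ.erase i, ∑ k ∈ univ.erase i, a i * b j * b k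
      = ∑ j ∈ univ.erase i, (a i * b j) * ∑ k ∈ univ.erase i, b k := by
        apply Finset.sum_congr rfl
        intro j _
        rw [Finset.mul_sum]
    _ = a i * ((∑ j, b j) - b i) * ((∑ j, b j) - b i) := by
        rw [← Finset.sum_mul, ← Finset.mul_sum, herase]

lemma pairing (m : ℕ) (hm : (m:ℂ) ≠ 0) (α : ℝ) (z x : Fin m → ℂ)
    (hz : ∀ i, (starRingEnd ℂ) (z i) * z i = 1/(m:ℂ))
    (hx : ∀ i, (starRingEnd ℂ) (x i) * x i = 1/(m:ℂ)) :
    (∑ p ∈ Aset m, (if p.2.1 = p.2.2 then (1:ℂ) else 2) *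
        ((starRingEnd ℂ) ((starRingEnd ℂ) (z p.1) * z p.2.1 * z p.2.2) *
          ((starRingEnd ℂ) (x p.1) * x p.2.1 * x p.2.2)))
      + ((2/(m:ℂ) - 1/(m:ℂ)^2) - (α:ℂ)) * (∑ k, (starRingEnd ℂ) (z k) * x k)
    = (starRingEnd ℂ) (∑ k, (starRingEnd ℂ) (z k) * x k)
        * (∑ k, (starRingEnd ℂ) (z k) * x k) * (∑ k, (starRingEnd ℂ) (z k) * x k)
      - (α:ℂ) * (∑ k, (starRingEnd ℂ) (z k) * x k) := by
  classical
  set a : Fin m → ℂ := fun i => z i * (starRingEnd ℂ) (x i) with ha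
  set b : Fin m → ℂ := fun i => (starRingEnd ℂ) (z i) * x i with hb
  set t : ℂ := ∑ k, b k with ht
  have hbody : ∀ p : Fin m × Fin m × Fin m,
      (starRingEnd ℂ) ((starRingEnd ℂ) (z p.1) * z p.2.1 * z p.2.2) *
        ((starRingEnd ℂ) (x p.1) * x p.2.1 * x p.2.2)
      = a p.1 * b p.2.1 * b p.2.2 := by
    intro p
    simp only [ha, hb, map_mul, Complex.conj_conj]
    ring
  have hsum1 : (∑ p ∈ Aset m, (if p.2.1 = p.2.2 then (1:ℂ) else 2) *
        ((starRingEnd ℂ) ((starRingEnd ℂ) (z p.1) * z p.2.1 * z p.2.2) *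
          ((starRingEnd ℂ) (x p.1) * x p.2.1 * x p.2.2)))
      = ∑ i, a i * (t - b i) * (t - b i) := by
    rw [Finset.sum_congr rfl (fun p _ => by rw [hbody p])]
    exact sumA m a b
  have hab : ∀ i, a i * b i = 1/(m:ℂ)^2 := by
    intro i
    have : a i * b i = ((starRingEnd ℂ) (z i) * z i) * ((starRingEnd ℂ) (x i) * x i) := by
      simp only [ha, hb]; ring
    rw [this, hz i, hx i]
    ring
  have hconj : ∑ i, a i = (starRingEnd ℂ) t := by
    rw [ht, map_sum]
    apply Finset.sum_congr rfl
    intro i _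
    simp [ha, hb, map_mul, mul_comm]
  have hexp : ∑ i, a i * (t - b i) * (t - b i)
      = (starRingEnd ℂ) t * t * t - (2/(m:ℂ)) * t + (1/(m:ℂ)^2) * t := by
    have step : ∀ i, a i * (t - b i) * (t - b i)
        = a i * (t * t) - (1/(m:ℂ)^2) * (2 * t) + (1/(m:ℂ)^2) * b i := by
      intro i
      have h := hab i
      calc a i * (t - b i) * (t - b i)
          = a i * (t * t) - (a i * b i) * (2 * t) + (a i * b i) * b i := by ring
        _ = a i * (t * t) - (1/(m:ℂ)^2) * (2 * t) + (1/(m:ℂ)^2) * b i := by rw [h]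
    rw [Finset.sum_congr rfl (fun i _ => step i), Finset.sum_add_distrib,
      Finset.sum_sub_distrib]
    have e1 : ∑ i : Fin m, a i * (t * t) = (starRingEnd ℂ) t * t * t := by
      rw [← Finset.sum_mul, hconj]; ring
    have e2 : ∑ _i : Fin m, (1/(m:ℂ)^2) * (2 * t) = (2/(m:ℂ)) * t := by
      rw [Finset.sum_const, Finset.card_univ, Fintype.card_fin, nsmul_eq_mul]
      field_simp
    have e3 : ∑ i : Fin m, (1/(m:ℂ)^2) * b i = (1/(m:ℂ)^2) * t := by
      rw [← Finset.mul_sum, ← ht]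
    rw [e1, e2, e3]
  rw [hsum1, hexp]
  field_simp
  ring

abbrev IdxA (m : ℕ) := {p : Fin m × Fin m × Fin m // p.2.1 ≤ p.2.2 ∧ p.1 ≠ p.2.1 ∧ p.1 ≠ p.2.2}


noncomputable def feat (m : ℕ) (x : EuclideanSpace ℂ (Fin m)) : (IdxA m ⊕ Fin m) → ℂ :=
  Sum.elim (fun p => (starRingEnd ℂ) (x p.1.1) * x p.1.2.1 * x p.1.2.2) (fun k => x k)

noncomputable def pairL (m : ℕ) (β : ℂ) (z : EuclideanSpace ℂ (Fin m)) :
    ((IdxA m ⊕ Fin m) → ℂ) →ₗ[ℂ] ℂ where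
  toFun f := (∑ p : IdxA m, ((if p.1.2.1 = p.1.2.2 then (1:ℂ) else 2) *
      (starRingEnd ℂ) ((starRingEnd ℂ) (z p.1.1) * z p.1.2.1 * z p.1.2.2)) * f (Sum.inl p))
    + β * ∑ k, (starRingEnd ℂ) (z k) * f (Sum.inr k)
  map_add' f g := by
    simp only [Pi.add_apply, mul_add, Finset.sum_add_distrib]
    ring
  map_smul' c f := by
    simp only [Pi.smul_apply, smul_eq_mul, RingHom.id_apply]
    rw [mul_add]
    congr 1
    · rw [Finset.mul_sum]
      apply Finset.sum_congr rfl
      intro p _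
      ring
    · have h : ∀ k : Fin m, (starRingEnd ℂ) (z k) * (c * f (Sum.inr k))
          = c * ((starRingEnd ℂ) (z k) * f (Sum.inr k)) := fun k => by ring
      rw [Finset.sum_congr rfl (fun k _ => h k), ← Finset.mul_sum]
      ring

lemma pairL_feat (m : ℕ) (hmC : (m:ℂ) ≠ 0) (α : ℝ) (z x : EuclideanSpace ℂ (Fin m))
    (hz : ∀ i, (starRingEnd ℂ) (z i) * z i = 1/(m:ℂ))
    (hx : ∀ i, (starRingEnd ℂ) (x i) * x i = 1/(m:ℂ)) :
    pairL m ((2/(m:ℂ) - 1/(m:ℂ)^2) - (α:ℂ)) z (feat m x)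
      = (starRingEnd ℂ) (∑ k, (starRingEnd ℂ) (z k) * x k)
        * (∑ k, (starRingEnd ℂ) (z k) * x k) * (∑ k, (starRingEnd ℂ) (z k) * x k)
      - (α:ℂ) * (∑ k, (starRingEnd ℂ) (z k) * x k) := by
  have hmem : ∀ p : Fin m × Fin m × Fin m,
      p ∈ Aset m ↔ (p.2.1 ≤ p.2.2 ∧ p.1 ≠ p.2.1 ∧ p.1 ≠ p.2.2) := by
    intro p; simp [Aset]
  have hsub : (∑ p ∈ Aset m, (if p.2.1 = p.2.2 then (1:ℂ) else 2) *
      ((starRingEnd ℂ) ((starRingEnd ℂ) (z p.1) * z p.2.1 * z p.2.2) *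
        ((starRingEnd ℂ) (x p.1) * x p.2.1 * x p.2.2)))
      = ∑ p : IdxA m, (if p.1.2.1 = p.1.2.2 then (1:ℂ) else 2) *
      ((starRingEnd ℂ) ((starRingEnd ℂ) (z p.1.1) * z p.1.2.1 * z p.1.2.2) *
        ((starRingEnd ℂ) (x p.1.1) * x p.1.2.1 * x p.1.2.2)) :=
    Finset.sum_subtype (Aset m) hmem
      (fun p => (if p.2.1 = p.2.2 then (1:ℂ) else 2) *
        ((starRingEnd ℂ) ((starRingEnd ℂ) (z p.1) * z p.2.1 * z p.2.2) *
          ((starRingEnd ℂ) (x p.1) * x p.2.1 * x p.2.2)))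
  show (∑ p : IdxA m, ((if p.1.2.1 = p.1.2.2 then (1:ℂ) else 2) *
      (starRingEnd ℂ) ((starRingEnd ℂ) (z p.1.1) * z p.1.2.1 * z p.1.2.2)) * (feat m x (Sum.inl p)))
    + ((2/(m:ℂ) - 1/(m:ℂ)^2) - (α:ℂ)) * ∑ k, (starRingEnd ℂ) (z k) * (feat m x (Sum.inr k)) = _
  have hfeat1 : ∀ p : IdxA m, feat m x (Sum.inl p)
      = (starRingEnd ℂ) (x p.1.1) * x p.1.2.1 * x p.1.2.2 := fun p => rfl
  have hfeat2 : ∀ k : Fin m, feat m x (Sum.inr k) = x k := fun k => rfl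
  calc (∑ p : IdxA m, ((if p.1.2.1 = p.1.2.2 then (1:ℂ) else 2) *
      (starRingEnd ℂ) ((starRingEnd ℂ) (z p.1.1) * z p.1.2.1 * z p.1.2.2)) * (feat m x (Sum.inl p)))
    + ((2/(m:ℂ) - 1/(m:ℂ)^2) - (α:ℂ)) * ∑ k, (starRingEnd ℂ) (z k) * (feat m x (Sum.inr k))
      = (∑ p : IdxA m, (if p.1.2.1 = p.1.2.2 then (1:ℂ) else 2) *
          ((starRingEnd ℂ) ((starRingEnd ℂ) (z p.1.1) * z p.1.2.1 * z p.1.2.2) *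
            ((starRingEnd ℂ) (x p.1.1) * x p.1.2.1 * x p.1.2.2)))
        + ((2/(m:ℂ) - 1/(m:ℂ)^2) - (α:ℂ)) * ∑ k, (starRingEnd ℂ) (z k) * x k := by
        congr 1
        · apply Finset.sum_congr rfl
          intro p _
          rw [hfeat1 p]
          ring
    _ = (∑ p ∈ Aset m, (if p.2.1 = p.2.2 then (1:ℂ) else 2) *
          ((starRingEnd ℂ) ((starRingEnd ℂ) (z p.1) * z p.2.1 * z p.2.2) *
            ((starRingEnd ℂ) (x p.1) * x p.2.1 * x p.2.2)))
        + ((2/(m:ℂ) - 1/(m:ℂ)^2) - (α:ℂ)) * ∑ k, (starRingEnd ℂ) (z k) * x k := by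
        rw [hsub]
    _ = _ := pairing m hmC α z x hz hx

lemma flat_entry (m : ℕ) (hm : m ≠ 0) (x : EuclideanSpace ℂ (Fin m))
    (h : ∀ i, ‖x i‖ = 1 / Real.sqrt m) (i : Fin m) :
    (starRingEnd ℂ) (x i) * x i = 1/(m:ℂ) := by
  have hm' : (0:ℝ) < m := by positivity
  have h1 : (starRingEnd ℂ) (x i) * x i = (Complex.normSq (x i) : ℂ) := by
    rw [mul_comm, Complex.mul_conj]
  rw [h1, Complex.normSq_eq_norm_sq, h i]
  rw [div_pow, one_pow, Real.sq_sqrt (le_of_lt hm')]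
  push_cast
  norm_num

lemma inner_formula (m : ℕ) (z x : EuclideanSpace ℂ (Fin m)) :
    (inner ℂ z x : ℂ) = ∑ k, (starRingEnd ℂ) (z k) * x k := by
  rw [PiLp.inner_apply]
  simp [RCLike.inner_apply, mul_comm]


theorem stmt_0 (m : ℕ) (α : ℝ) (hα : 0 < α) (hα1 : α < 1)
    (S : Finset (EuclideanSpace ℂ (Fin m)))
    (hunit : ∀ x ∈ S, ‖x‖ = 1)
    (hflat : ∀ x ∈ S, ∀ i, ‖x i‖ = 1 / Real.sqrt m)
    (hang : ∀ x ∈ S, ∀ y ∈ S, x ≠ y →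
      ‖(inner ℂ x y : ℂ)‖ ^ 2 = 0 ∨ ‖(inner ℂ x y : ℂ)‖ ^ 2 = α) :
    (S.card : ℝ) ≤ m * (m ^ 2 - m + 2) / 2 := by
  classical
  by_cases hm0 : m = 0
  · subst hm0
    have hS : S = ∅ := by
      rcases Finset.eq_empty_or_nonempty S with h | ⟨x, hx⟩
      · exact h
      · exfalso
        have h1 := hunit x hx
        have h2 : ‖x‖ = 0 := by
          rw [EuclideanSpace.norm_eq]
          simp
        rw [h2] at h1
        norm_num at h1
    rw [hS]
    norm_num
  · have hm1 : 1 ≤ m := Nat.one_le_iff_ne_zero.2 hm0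
    have hmC : ((m:ℕ):ℂ) ≠ 0 := Nat.cast_ne_zero.2 hm0
    have hflat' : ∀ x ∈ S, ∀ i, (starRingEnd ℂ) (x i) * x i = 1/(m:ℂ) :=
      fun x hx i => flat_entry m hm0 x (hflat x hx) i
    have hdiag : ∀ x ∈ S, (∑ k, (starRingEnd ℂ) (x k) * x k) = 1 := by
      intro x hx
      rw [Finset.sum_congr rfl (fun k _ => hflat' x hx k), Finset.sum_const,
        Finset.card_univ, Fintype.card_fin, nsmul_eq_mul]
      field_simp
    have hLI : LinearIndependent ℂ (fun x : {x // x ∈ S} => feat m x.1) := by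
      rw [Fintype.linearIndependent_iff]
      intro g hg z
      have hL : ∑ x : {x // x ∈ S},
          g x * pairL m ((2/(m:ℂ) - 1/(m:ℂ)^2) - (α:ℂ)) z.1 (feat m x.1) = 0 := by
        calc ∑ x : {x // x ∈ S},
            g x * pairL m ((2/(m:ℂ) - 1/(m:ℂ)^2) - (α:ℂ)) z.1 (feat m x.1)
            = pairL m ((2/(m:ℂ) - 1/(m:ℂ)^2) - (α:ℂ)) z.1
                (∑ x : {x // x ∈ S}, g x • feat m x.1) := by
              rw [map_sum]
              apply Finset.sum_congr rfl
              intro x _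
              rw [map_smul, smul_eq_mul]
          _ = 0 := by rw [hg, map_zero]
      have hval : ∀ x : {x // x ∈ S},
          g x * pairL m ((2/(m:ℂ) - 1/(m:ℂ)^2) - (α:ℂ)) z.1 (feat m x.1)
            = if x = z then g x * (1 - (α:ℂ)) else 0 := by
        intro x
        have hpf := pairL_feat m hmC α z.1 x.1 (hflat' z.1 z.2) (hflat' x.1 x.2)
        by_cases hxz : x = z
        · subst hxz
          rw [hdiag x.1 x.2] at hpf
          rw [if_pos rfl, hpf]
          simp
        · rw [if_neg hxz, hpf]
          have hne : z.1 ≠ x.1 := fun h => hxz (Subtype.ext h.symm)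
          have hiz : (inner ℂ z.1 x.1 : ℂ) = ∑ k, (starRingEnd ℂ) (z.1 k) * x.1 k :=
            inner_formula m z.1 x.1
          have hnorm : (starRingEnd ℂ) (∑ k, (starRingEnd ℂ) (z.1 k) * x.1 k)
              * (∑ k, (starRingEnd ℂ) (z.1 k) * x.1 k)
              = ((‖(inner ℂ z.1 x.1 : ℂ)‖^2 : ℝ) : ℂ) := by
            rw [hiz, mul_comm, Complex.mul_conj]
            norm_cast
            rw [Complex.normSq_eq_norm_sq]
          rcases hang z.1 z.2 x.1 x.2 hne with h0 | hα'
          · have ht0 : (∑ k, (starRingEnd ℂ) (z.1 k) * x.1 k) = 0 := by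
              rw [← hiz]
              have := pow_eq_zero_iff (n := 2) (by norm_num) |>.1 h0
              exact norm_eq_zero.1 this
            rw [ht0]
            simp
          · have hT : (starRingEnd ℂ) (∑ k, (starRingEnd ℂ) (z.1 k) * x.1 k)
                * (∑ k, (starRingEnd ℂ) (z.1 k) * x.1 k) = (α:ℂ) := by
              rw [hnorm, hα']
            have : (starRingEnd ℂ) (∑ k, (starRingEnd ℂ) (z.1 k) * x.1 k)
                * (∑ k, (starRingEnd ℂ) (z.1 k) * x.1 k) * (∑ k, (starRingEnd ℂ) (z.1 k) * x.1 k)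
                - (α:ℂ) * (∑ k, (starRingEnd ℂ) (z.1 k) * x.1 k)
                = ((starRingEnd ℂ) (∑ k, (starRingEnd ℂ) (z.1 k) * x.1 k)
                    * (∑ k, (starRingEnd ℂ) (z.1 k) * x.1 k) - (α:ℂ))
                  * (∑ k, (starRingEnd ℂ) (z.1 k) * x.1 k) := by ring
            rw [this, hT]
            simp
      rw [Finset.sum_congr rfl (fun x _ => hval x)] at hL
      rw [Finset.sum_ite_eq' univ z (fun x => g x * (1 - (α:ℂ)))] at hL
      simp only [Finset.mem_univ, if_true] at hL
      have h1 : (1 : ℂ) - (α:ℂ) ≠ 0 := by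
        intro h
        have h2 : (α:ℂ) = 1 := by
          have := sub_eq_zero.1 h
          exact this.symm
        rw [Complex.ofReal_eq_one] at h2
        exact absurd h2 (ne_of_lt hα1)
      rcases mul_eq_zero.1 hL with h | h
      · exact h
      · exact absurd h h1
    have hcard : Fintype.card {x // x ∈ S} ≤ Fintype.card (IdxA m ⊕ Fin m) := by
      have h := hLI.fintype_card_le_finrank
      rwa [Module.finrank_pi] at h
    have hcards : Fintype.card {x // x ∈ S} = S.card := Fintype.card_coe S
    have hciA : Fintype.card (IdxA m) = (Aset m).card := by
      rw [Fintype.card_subtype]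
      rfl
    have hsum : Fintype.card (IdxA m ⊕ Fin m) = (Aset m).card + m := by
      rw [Fintype.card_sum, hciA, Fintype.card_fin]
    have hfinal : 2 * S.card ≤ m*m*(m-1) + 2*m := by
      have hb : S.card ≤ (Aset m).card + m := by
        rw [← hcards, ← hsum]
        exact hcard
      calc 2*S.card ≤ 2*((Aset m).card + m) := by omega
        _ = 2*(Aset m).card + 2*m := by ring
        _ = m*m*(m-1) + 2*m := by rw [countA]
    have hR : ((2 * S.card : ℕ) : ℝ) ≤ ((m*m*(m-1) + 2*m : ℕ) : ℝ) := Nat.cast_le.2 hfinal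
    push_cast [Nat.cast_sub hm1] at hR
    rw [le_div_iff₀ (by norm_num : (0:ℝ) < 2)]
    nlinarith [hR]
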